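/- In the bandlimited MSE setup, for indices i ∈ [ℓ+1, ℓ+b]: if 1 + 2λ/μ_i > (σ²/n)·b then (1/b)·a_i(λ) > (σ²/n)·μ_i², and so M(i) < M(i−1); whereas if 1 + 2λ/μ_i ≤ (σ²/n)·b then M(i) ≥ M(i−1). -/
import Mathlib


theorem stmt11 (n ℓ b : ℕ) (hn : 1 ≤ n) (hb : 1 ≤ b) (hlb : ℓ + b ≤ n)
    (μ : ℕ → ℝ) (hpos : ∀ i, 1 ≤ i → i ≤ n → 0 < μ i)
    (hdec : ∀ i j, 1 ≤ i → i < j → j ≤ n → μ j < μ i)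
    (lam σ : ℝ) (hlam : 0 < lam) (hσ : 0 < σ)
    (a : ℕ → ℝ) (ha : ∀ i, a i = (μ i + lam)^2 - lam^2)
    (M : ℕ → ℝ)
    (hM : ∀ r, M r = 1 - (1/b) * (∑ i ∈ Finset.Icc (ℓ+1) (min (ℓ+b) r), a i / (μ i + lam)^2)
        + (σ^2 / n) * ∑ i ∈ Finset.Icc 1 r, (μ i)^2 / (μ i + lam)^2) :
    ∀ i : ℕ, ℓ + 1 ≤ i → i ≤ ℓ + b →
      ((σ^2 / n) * b < 1 + 2*lam/μ i →
        (σ^2 / n) * (μ i)^2 < (1/b) * a i ∧ M i < M (i-1)) ∧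
      (1 + 2*lam/μ i ≤ (σ^2 / n) * b → M (i-1) ≤ M i) := by
  rintro i hi1 hi2
  obtain ⟨k, rfl⟩ : ∃ k, i = k + 1 := ⟨i - 1, (Nat.succ_pred_eq_of_pos (by omega)).symm⟩
  simp only [Nat.add_sub_cancel]
  have hμ : 0 < μ (k + 1) := hpos _ (by omega) (by omega)
  have hbR : (0 : ℝ) < b := by exact_mod_cast hb
  have hnR : (0 : ℝ) < n := by exact_mod_cast hn
  have hd : (0 : ℝ) < (μ (k+1) + lam) ^ 2 := by positivity
  have hmin1 : min (ℓ + b) (k + 1) = k + 1 := min_eq_right hi2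
  have hmin2 : min (ℓ + b) k = k := min_eq_right (by omega)
  have hsum1 : (∑ j ∈ Finset.Icc (ℓ+1) (k+1), a j / (μ j + lam)^2)
      = (∑ j ∈ Finset.Icc (ℓ+1) k, a j / (μ j + lam)^2) + a (k+1) / (μ (k+1) + lam)^2 :=
    Finset.sum_Icc_succ_top hi1 _
  have hsum2 : (∑ j ∈ Finset.Icc 1 (k+1), (μ j)^2 / (μ j + lam)^2)
      = (∑ j ∈ Finset.Icc 1 k, (μ j)^2 / (μ j + lam)^2) + (μ (k+1))^2 / (μ (k+1) + lam)^2 :=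
    Finset.sum_Icc_succ_top (by omega) _
  have key : M (k+1) - M k
      = ((σ^2/n) * (μ (k+1))^2 - (1/b) * a (k+1)) / (μ (k+1) + lam)^2 := by
    rw [hM (k+1), hM k, hmin1, hmin2, hsum1, hsum2]
    field_simp
    ring
  have haval : a (k+1) = (μ (k+1))^2 + 2 * lam * μ (k+1) := by rw [ha]; ring
  have hmul : (1 + 2*lam/μ (k+1)) * μ (k+1) = μ (k+1) + 2 * lam := by
    field_simp
  constructor
  · intro h
    have h' : (σ^2/n) * b * μ (k+1) < μ (k+1) + 2*lam := by
      have := mul_lt_mul_of_pos_right h hμ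
      rwa [hmul] at this
    have hlt : (σ^2/n) * (μ (k+1))^2 < (1/b) * a (k+1) := by
      rw [haval]
      rw [show (1/b : ℝ) * ((μ (k+1))^2 + 2 * lam * μ (k+1))
          = ((μ (k+1))^2 + 2 * lam * μ (k+1)) / b by ring, lt_div_iff₀ hbR]
      nlinarith [mul_lt_mul_of_pos_right h' hμ]
    refine ⟨hlt, ?_⟩
    have : M (k+1) - M k < 0 := by
      rw [key]; exact div_neg_of_neg_of_pos (by linarith) hd
    linarith
  · intro h
    have h' : μ (k+1) + 2*lam ≤ (σ^2/n) * b * μ (k+1) := by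
      have := mul_le_mul_of_nonneg_right h hμ.le
      rwa [hmul] at this
    have hge : (1/b) * a (k+1) ≤ (σ^2/n) * (μ (k+1))^2 := by
      rw [haval]
      rw [show (1/b : ℝ) * ((μ (k+1))^2 + 2 * lam * μ (k+1))
          = ((μ (k+1))^2 + 2 * lam * μ (k+1)) / b by ring, div_le_iff₀ hbR]
      nlinarith [mul_le_mul_of_nonneg_right h' hμ.le]
    have : 0 ≤ M (k+1) - M k := by
      rw [key]; exact div_nonneg (by linarith) hd.le
    linarith
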